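/- For every integer ℓ ≥ 2, Σ_{j=1}^{ℓ−1} (j·(ℓ−j))^{−1/2} ≤ π. -/

import Mathlib

open Real Finset

-- midpoint convexity of x ↦ 1/√(1-x²)
lemma convA {a b : ℝ} (ha : a ^ 2 < 1) (hb : b ^ 2 < 1) :
    2 / Real.sqrt (1 - ((a + b) / 2) ^ 2) ≤ 1 / Real.sqrt (1 - a ^ 2) + 1 / Real.sqrt (1 - b ^ 2) := by
  set A := Real.sqrt (1 - a ^ 2) with hA
  set B := Real.sqrt (1 - b ^ 2) with hB
  set C := Real.sqrt (1 - ((a + b) / 2) ^ 2) with hC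
  have hA0 : 0 < A := Real.sqrt_pos.2 (by linarith)
  have hB0 : 0 < B := Real.sqrt_pos.2 (by linarith)
  have hw : ((a + b) / 2) ^ 2 < 1 := by nlinarith
  have hC0 : 0 < C := Real.sqrt_pos.2 (by linarith)
  have hA2 : A ^ 2 = 1 - a ^ 2 := Real.sq_sqrt (by linarith)
  have hB2 : B ^ 2 = 1 - b ^ 2 := Real.sq_sqrt (by linarith)
  have hC2 : C ^ 2 = 1 - ((a + b) / 2) ^ 2 := Real.sq_sqrt (by linarith)
  have key : A * B ≤ C ^ 2 := by nlinarith [sq_nonneg (A - B), sq_nonneg (a - b)]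
  rw [div_add_div _ _ (ne_of_gt hA0) (ne_of_gt hB0), div_le_div_iff₀ hC0 (by positivity)]
  -- 2 * (A * B) ≤ (1*B + A*1) * C
  nlinarith [sq_nonneg (A - B), mul_pos hA0 hB0, sq_nonneg (A + B - 2*C), mul_pos (mul_pos hA0 hB0) hC0]

lemma mvtB {w δ : ℝ} (hδ : 0 < δ) (hu : (w + δ) ^ 2 < 1) (hv : (w - δ) ^ 2 < 1) :
    2 * δ / Real.sqrt (1 - w ^ 2) ≤ Real.arcsin (w + δ) - Real.arcsin (w - δ) := by
  have hw : w ^ 2 < 1 := by nlinarith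
  set c : ℝ := 1 / Real.sqrt (1 - w ^ 2) with hc
  set g : ℝ → ℝ := fun t => Real.arcsin (w + t) - Real.arcsin (w - t) - 2 * c * t with hg
  have hsq : ∀ t ∈ Set.Icc (0:ℝ) δ, (w + t) ^ 2 < 1 ∧ (w - t) ^ 2 < 1 := by
    intro t ht
    obtain ⟨h0, h1⟩ := ht
    constructor <;> nlinarith [mul_nonneg h0 (by linarith : (0:ℝ) ≤ δ - t)]
  have hderiv : ∀ t ∈ Set.Ioo (0:ℝ) δ, HasDerivAt g
      (1 / Real.sqrt (1 - (w + t) ^ 2) + 1 / Real.sqrt (1 - (w - t) ^ 2) - 2 * c) t := by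
    intro t ht
    obtain ⟨h1, h2⟩ := hsq t ⟨ht.1.le, ht.2.le⟩
    have e1 : (w + t) ≠ -1 := by intro h; rw [h] at h1; norm_num at h1
    have e2 : (w + t) ≠ 1 := by intro h; rw [h] at h1; norm_num at h1
    have e3 : (w - t) ≠ -1 := by intro h; rw [h] at h2; norm_num at h2
    have e4 : (w - t) ≠ 1 := by intro h; rw [h] at h2; norm_num at h2
    have d1 : HasDerivAt (fun t => Real.arcsin (w + t)) (1 / Real.sqrt (1 - (w + t) ^ 2)) t := by
      have := (Real.hasDerivAt_arcsin e1 e2).comp t ((hasDerivAt_id t).const_add w)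
      simpa [Function.comp_def] using this
    have d2 : HasDerivAt (fun t => Real.arcsin (w - t)) (-(1 / Real.sqrt (1 - (w - t) ^ 2))) t := by
      have := (Real.hasDerivAt_arcsin e3 e4).comp t ((hasDerivAt_id t).const_sub w)
      simpa [Function.comp_def] using this
    have d3 : HasDerivAt (fun t : ℝ => 2 * c * t) (2 * c) t := by
      simpa using (hasDerivAt_id t).const_mul (2 * c)
    have := (d1.sub d2).sub d3
    refine HasDerivAt.congr_deriv this ?_
    ring
  have mono : MonotoneOn g (Set.Icc 0 δ) := by
    apply monotoneOn_of_deriv_nonneg (convex_Icc 0 δ)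
    · have : Continuous g := by
        apply Continuous.sub
        apply Continuous.sub
        · exact Real.continuous_arcsin.comp (continuous_const.add continuous_id)
        · exact Real.continuous_arcsin.comp (continuous_const.sub continuous_id)
        · exact continuous_const.mul continuous_id
      exact this.continuousOn
    · intro t ht
      rw [interior_Icc] at ht
      exact ((hderiv t ht).differentiableAt).differentiableWithinAt
    · intro t ht
      rw [interior_Icc] at ht
      rw [(hderiv t ht).deriv]
      obtain ⟨h1, h2⟩ := hsq t ⟨ht.1.le, ht.2.le⟩
      have := convA h1 h2
      have hmid : ((w + t) + (w - t)) / 2 = w := by ring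
      rw [hmid] at this
      rw [hc, mul_one_div]
      linarith
  have h0 : g 0 = 0 := by simp [hg]
  have hδ' : g 0 ≤ g δ := mono (Set.left_mem_Icc.2 hδ.le) (Set.right_mem_Icc.2 hδ.le) hδ.le
  rw [h0] at hδ'
  have : 2 * δ / Real.sqrt (1 - w ^ 2) = 2 * c * δ := by rw [hc]; ring
  rw [this]
  simp only [hg] at hδ'
  linarith

theorem riemann_sum_le_pi (ℓ : ℕ) (hl : 2 ≤ ℓ) :
    ∑ j ∈ Finset.Icc 1 (ℓ - 1), ((j : ℝ) * ((ℓ : ℝ) - (j : ℝ))) ^ (-(1 / 2) : ℝ) ≤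
      Real.pi := by
  have hL : (2:ℝ) ≤ (ℓ:ℝ) := by exact_mod_cast hl
  have hL0 : (0:ℝ) < (ℓ:ℝ) := by linarith
  set H : ℕ → ℝ := fun i => Real.arcsin ((2 * (i:ℝ) + 1 - ℓ) / ℓ) with hH
  have key : ∀ j ∈ Finset.Icc 1 (ℓ - 1),
      ((j : ℝ) * ((ℓ : ℝ) - (j : ℝ))) ^ (-(1 / 2) : ℝ) ≤ H j - H (j - 1) := by
    intro j hj
    rw [Finset.mem_Icc] at hj
    obtain ⟨hj1, hj2⟩ := hj
    have hj1' : (1:ℝ) ≤ (j:ℝ) := by exact_mod_cast hj1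
    have hj2' : (j:ℝ) ≤ (ℓ:ℝ) - 1 := by
      have : j + 1 ≤ ℓ := by omega
      have := (Nat.cast_le (α := ℝ)).2 this
      push_cast at this
      linarith
    set w : ℝ := (2 * (j:ℝ) - ℓ) / ℓ with hw
    set δ : ℝ := 1 / ℓ with hδ
    have hδ0 : 0 < δ := by positivity
    have hu : (w + δ) ^ 2 < 1 := by
      rw [hw, hδ, ← add_div, div_pow, div_lt_one (by positivity)]
      nlinarith
    have hv : (w - δ) ^ 2 < 1 := by
      rw [hw, hδ, div_sub_div_same, div_pow, div_lt_one (by positivity)]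
      nlinarith
    have hmvt := mvtB hδ0 hu hv
    have hx0 : (0:ℝ) < (j:ℝ) * ((ℓ:ℝ) - (j:ℝ)) := by nlinarith
    have hsqrt : Real.sqrt (1 - w ^ 2) = 2 * Real.sqrt ((j:ℝ) * ((ℓ:ℝ) - (j:ℝ))) / ℓ := by
      rw [hw]
      rw [show 1 - ((2 * (j:ℝ) - ℓ) / ℓ) ^ 2 = (2:ℝ)^2 * ((j:ℝ) * ((ℓ:ℝ) - (j:ℝ))) / ℓ^2 by
        field_simp; ring]
      rw [Real.sqrt_div' _ (by positivity), Real.sqrt_mul (by positivity), Real.sqrt_sq hL0.le,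
        Real.sqrt_sq (by norm_num)]
    have heq : ((j : ℝ) * ((ℓ : ℝ) - (j : ℝ))) ^ (-(1 / 2) : ℝ) = 2 * δ / Real.sqrt (1 - w ^ 2) := by
      rw [hsqrt, hδ, Real.rpow_neg hx0.le, ← Real.sqrt_eq_rpow]
      have hs0 : Real.sqrt ((j:ℝ) * ((ℓ:ℝ) - (j:ℝ))) ≠ 0 := by positivity
      field_simp
    have hHj : H j = Real.arcsin (w + δ) := by
      have e : (2 * (j:ℝ) + 1 - ℓ) / ℓ = w + δ := by
        rw [hw, hδ, ← add_div]
        ring_nf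
      simp only [hH]
      rw [e]
    have hHj' : H (j - 1) = Real.arcsin (w - δ) := by
      have e : (2 * ((j - 1 : ℕ):ℝ) + 1 - ℓ) / ℓ = w - δ := by
        rw [hw, hδ, div_sub_div_same, Nat.cast_sub hj1]
        ring_nf
      simp only [hH]
      rw [e]
    rw [heq, hHj, hHj']
    exact hmvt
  calc ∑ j ∈ Finset.Icc 1 (ℓ - 1), ((j : ℝ) * ((ℓ : ℝ) - (j : ℝ))) ^ (-(1 / 2) : ℝ)
      ≤ ∑ j ∈ Finset.Icc 1 (ℓ - 1), (H j - H (j - 1)) := Finset.sum_le_sum key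
    _ = ∑ i ∈ Finset.range (ℓ - 1), (H (i + 1) - H i) := by
        rw [show Finset.Icc 1 (ℓ - 1) = Finset.Ico 1 ℓ by
          rw [← Finset.Ico_add_one_right_eq_Icc]
          congr 1
          omega]
        rw [Finset.sum_Ico_eq_sum_range]
        apply Finset.sum_congr rfl
        intro i _
        have e1 : 1 + i - 1 = i := by omega
        have e2 : 1 + i = i + 1 := by omega
        rw [e1, e2]
    _ = H (ℓ - 1) - H 0 := Finset.sum_range_sub H (ℓ - 1)
    _ ≤ π / 2 - -(π / 2) := by
        have h1 := Real.arcsin_le_pi_div_two ((2 * ((ℓ - 1 : ℕ) : ℝ) + 1 - ℓ) / ℓ)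
        have h2 := Real.neg_pi_div_two_le_arcsin ((2 * ((0:ℕ) : ℝ) + 1 - ℓ) / ℓ)
        rw [hH]
        simp only []
        linarith
    _ = π := by ring
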